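/- Let K be a field and F, G ∈ K[x,y] be relatively prime nonzero homogeneous polynomials of degrees a and b respectively, with a, b ≥ 1. Then the ideal ⟨F,G⟩ contains ⟨x,y⟩^{a+b-1}, i.e., every monomial of degree a+b-1 lies in ⟨F,G⟩. -/

import Mathlib

open MvPolynomial

section Aux

variable {K : Type*} [Field K]

/-- degree of a finsupp on `Fin 2` -/
lemma degree_fin_two (d : Fin 2 →₀ ℕ) : d.degree = d 0 + d 1 := by
  rw [Finsupp.degree_apply, Finset.sum_subset (Finset.subset_univ _)]
  · exact Fin.sum_univ_two _
  · intro i _ hi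
    simpa using Finsupp.notMem_support_iff.mp hi

/-- The set of exponent vectors of degree `n` on two variables is equivalent to `Fin (n+1)`. -/
noncomputable def degEquiv (n : ℕ) :
    {d : Fin 2 →₀ ℕ | d.degree = n} ≃ Fin (n + 1) where
  toFun d := ⟨d.1 0, by
    have h := d.2
    rw [Set.mem_setOf_eq, degree_fin_two] at h
    omega⟩
  invFun i := ⟨Finsupp.single 0 (i : ℕ) + Finsupp.single 1 (n - (i : ℕ)), by
    rw [Set.mem_setOf_eq, degree_fin_two]
    have : (i : ℕ) ≤ n := by omega
    simp [Finsupp.single_apply]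
    omega⟩
  left_inv d := by
    have h := d.2
    rw [Set.mem_setOf_eq, degree_fin_two] at h
    apply Subtype.ext
    ext x
    fin_cases x <;> simp [Finsupp.single_apply] <;> omega
  right_inv i := by
    apply Fin.ext
    simp [Finsupp.single_apply]

noncomputable instance (n : ℕ) : Fintype {d : Fin 2 →₀ ℕ | d.degree = n} :=
  Fintype.ofEquiv (Fin (n + 1)) (degEquiv n).symm

/-- The submodule of degree-`n` homogeneous polynomials in two variables is
linearly equivalent to finitely supported functions on the degree-`n` exponent set. -/
noncomputable def homDegEquiv (n : ℕ) :
    (homogeneousSubmodule (Fin 2) K n) ≃ₗ[K] ({d : Fin 2 →₀ ℕ | d.degree = n} →₀ K) :=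
  (LinearEquiv.ofEq _ _ (homogeneousSubmodule_eq_finsupp_supported (Fin 2) K n)).trans
    (AddMonoidAlgebra.supportedEquivFinsupp _)

instance (n : ℕ) : FiniteDimensional K (homogeneousSubmodule (Fin 2) K n) :=
  Module.Finite.equiv (homDegEquiv n).symm

lemma finrank_homogeneousSubmodule (n : ℕ) :
    Module.finrank K (homogeneousSubmodule (Fin 2) K n) = n + 1 := by
  rw [LinearEquiv.finrank_eq (homDegEquiv (K := K) n), Module.finrank_finsupp_self,
    Fintype.card_congr (degEquiv n), Fintype.card_fin]

/-- A nonzero homogeneous polynomial of degree `n` cannot divide a homogeneous polynomial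
of smaller degree, unless the latter is zero. -/
lemma eq_zero_of_dvd_of_lt {σ R : Type*} [CommRing R] {n m : ℕ}
    {F T : MvPolynomial σ R} (hF : F.IsHomogeneous n) (hT : T.IsHomogeneous m)
    (hm : m < n) (h : F ∣ T) : T = 0 := by
  obtain ⟨U, rfl⟩ := h
  have h1 : homogeneousComponent m (F * U) = F * U := by
    rw [homogeneousComponent_of_mem hT, if_pos rfl]
  calc F * U = homogeneousComponent m (F * U) := h1.symm
    _ = homogeneousComponent m
        (∑ i ∈ Finset.range (U.totalDegree + 1), F * homogeneousComponent i U) := by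
          rw [← Finset.mul_sum, sum_homogeneousComponent]
    _ = ∑ i ∈ Finset.range (U.totalDegree + 1),
          homogeneousComponent m (F * homogeneousComponent i U) := by rw [map_sum]
    _ = 0 := Finset.sum_eq_zero fun i _ => by
        rw [homogeneousComponent_of_mem (hF.mul (homogeneousComponent_isHomogeneous i U)),
          if_neg (by omega)]

/-- Products of powers summing to `n` generate the `n`-th power of the span of a pair. -/
lemma pow_span_pair_le {R : Type*} [CommRing R] (x y : R) (J : Ideal R) (n : ℕ)
    (h : ∀ i j : ℕ, i + j = n → x ^ i * y ^ j ∈ J) :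
    Ideal.span {x, y} ^ n ≤ J := by
  have key : ∀ m : ℕ, Ideal.span {x, y} ^ m ≤
      Ideal.span {r : R | ∃ i j : ℕ, i + j = m ∧ r = x ^ i * y ^ j} := by
    intro m
    induction m with
    | zero =>
      rw [pow_zero, Ideal.one_eq_top, top_le_iff, Ideal.eq_top_iff_one]
      exact Ideal.subset_span ⟨0, 0, rfl, by simp⟩
    | succ m ih =>
      rw [pow_succ]
      refine le_trans (Ideal.mul_mono ih le_rfl) ?_
      rw [Ideal.span_mul_span']
      apply Ideal.span_mono
      rintro r ⟨s, ⟨i, j, hij, rfl⟩, t, ht, rfl⟩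
      rcases ht with rfl | rfl
      · exact ⟨i + 1, j, by omega, by ring⟩
      · exact ⟨i, j + 1, by omega, by ring⟩
  refine le_trans (key n) (Ideal.span_le.mpr ?_)
  rintro r ⟨i, j, hij, rfl⟩
  exact h i j hij

end Aux

/-- If `F, G ∈ K[x,y]` are relatively prime nonzero homogeneous polynomials of degrees
`a, b ≥ 1`, then `⟨x,y⟩^(a+b-1) ⊆ ⟨F,G⟩`. -/
theorem stmt2 (K : Type*) [Field K] (a b : ℕ) (ha : 1 ≤ a) (hb : 1 ≤ b)
    (F G : MvPolynomial (Fin 2) K) (hF0 : F ≠ 0) (hG0 : G ≠ 0)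
    (hF : F.IsHomogeneous a) (hG : G.IsHomogeneous b)
    (hrel : IsRelPrime F G) :
    (Ideal.span {(X 0 : MvPolynomial (Fin 2) K), X 1}) ^ (a + b - 1) ≤
      Ideal.span {F, G} := by
  set d := a + b - 1 with hd
  -- the linear map (S, T) ↦ F*S + G*T
  have hFS : ∀ S : homogeneousSubmodule (Fin 2) K (b - 1),
      (F * (S : MvPolynomial (Fin 2) K)).IsHomogeneous d := by
    intro S
    have := hF.mul S.2
    rwa [show a + (b - 1) = d by omega] at this
  have hGT : ∀ T : homogeneousSubmodule (Fin 2) K (a - 1),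
      (G * (T : MvPolynomial (Fin 2) K)).IsHomogeneous d := by
    intro T
    have := hG.mul T.2
    rwa [show b + (a - 1) = d by omega] at this
  let φ : (homogeneousSubmodule (Fin 2) K (b - 1) × homogeneousSubmodule (Fin 2) K (a - 1))
      →ₗ[K] homogeneousSubmodule (Fin 2) K d :=
    { toFun := fun p => ⟨F * p.1 + G * p.2, (hFS p.1).add (hGT p.2)⟩
      map_add' := fun p q => by
        apply Subtype.ext
        simp only [Prod.fst_add, Prod.snd_add, Submodule.coe_add, AddMemClass.coe_add]
        ring
      map_smul' := fun c p => by
        apply Subtype.ext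
        simp only [Prod.smul_fst, Prod.smul_snd, SetLike.val_smul, RingHom.id_apply]
        rw [smul_add, mul_smul_comm, mul_smul_comm] }
  have hinj : Function.Injective φ := by
    rw [injective_iff_map_eq_zero]
    intro p hp
    have h0 : F * (p.1 : MvPolynomial (Fin 2) K) + G * (p.2 : MvPolynomial (Fin 2) K) = 0 := by
      have := congrArg (Subtype.val) hp
      simpa [φ] using this
    have hdvd : F ∣ G * (p.2 : MvPolynomial (Fin 2) K) := by
      refine ⟨-(p.1 : MvPolynomial (Fin 2) K), ?_⟩
      linear_combination h0
    have hT0 : (p.2 : MvPolynomial (Fin 2) K) = 0 :=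
      eq_zero_of_dvd_of_lt hF p.2.2 (by omega) (hrel.dvd_of_dvd_mul_left hdvd)
    have hS0 : (p.1 : MvPolynomial (Fin 2) K) = 0 := by
      rw [hT0, mul_zero, add_zero, mul_eq_zero] at h0
      tauto
    exact Prod.ext (Subtype.ext (by simpa using hS0)) (Subtype.ext (by simpa using hT0))
  have hsurj : Function.Surjective φ := by
    rw [← LinearMap.injective_iff_surjective_of_finrank_eq_finrank]
    · exact hinj
    · rw [Module.finrank_prod, finrank_homogeneousSubmodule, finrank_homogeneousSubmodule,
        finrank_homogeneousSubmodule]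
      omega
  -- every homogeneous polynomial of degree d is in the span
  have hmem : ∀ p : MvPolynomial (Fin 2) K, p.IsHomogeneous d → p ∈ Ideal.span {F, G} := by
    intro p hp
    obtain ⟨⟨S, T⟩, hST⟩ := hsurj ⟨p, hp⟩
    have : F * (S : MvPolynomial (Fin 2) K) + G * (T : MvPolynomial (Fin 2) K) = p := by
      have := congrArg Subtype.val hST
      simpa [φ] using this
    rw [Ideal.mem_span_pair]
    exact ⟨S, T, by linear_combination this⟩
  apply pow_span_pair_le
  intro i j hij
  apply hmem
  have : ((X 0 : MvPolynomial (Fin 2) K) ^ i * X 1 ^ j).IsHomogeneous (1 * i + 1 * j) :=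
    ((isHomogeneous_X K 0).pow i).mul ((isHomogeneous_X K 1).pow j)
  rwa [show 1 * i + 1 * j = d by omega] at this
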